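/- Let φ denote either the maximum function max or the minimum function min on nonempty multisets of integers, and let ≿φ and ≻φ denote the corresponding order (≿max, ≻max or ≿min, ≻min). Let H, H', L, L' be nonempty multisets of integers, and for nonempty H and L define H ⊖ L to be the image of L under ℓ ↦ φ(H) − ℓ. If H ≿φ H' and L' ≿ms L, then (H ⊖ L) ≿dms (H' ⊖ L'). If in addition H ≻φ H', or L' ≻ms L, then (H ⊖ L) ≻dms (H' ⊖ L'). -/

import Mathlib

/-- The maximum of a multiset of integers (0 for the empty multiset; only used on nonempty ones). -/
def mmax (S : Multiset ℤ) : ℤ := WithBot.unbotD 0 ((S.map (fun x : ℤ => (x : WithBot ℤ))).sup)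

/-- The minimum of a multiset of integers (0 for the empty multiset; only used on nonempty ones). -/
def mmin (S : Multiset ℤ) : ℤ := WithTop.untopD 0 ((S.map (fun x : ℤ => (x : WithTop ℤ))).inf)

/-- max order, weak: S ≿max T. -/
def geMax (S T : Multiset ℤ) : Prop := T = 0 ∨ (S ≠ 0 ∧ T ≠ 0 ∧ mmax S ≥ mmax T)

/-- max order, strict: S ≻max T. -/
def gtMax (S T : Multiset ℤ) : Prop := (S ≠ 0 ∧ T ≠ 0 ∧ mmax S > mmax T) ∨ (S ≠ 0 ∧ T = 0)

/-- min order, weak: S ≿min T. -/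
def geMin (S T : Multiset ℤ) : Prop := S = 0 ∨ (S ≠ 0 ∧ T ≠ 0 ∧ mmin S ≥ mmin T)

/-- min order, strict: S ≻min T. -/
def gtMin (S T : Multiset ℤ) : Prop := (S ≠ 0 ∧ T ≠ 0 ∧ mmin S > mmin T) ∨ (S = 0 ∧ T ≠ 0)

/-- multiset order, strict: S ≻ms T. -/
def gtMS (S T : Multiset ℤ) : Prop :=
  ∃ W U V : Multiset ℤ, U ≠ 0 ∧ S = W + U ∧ T = W + V ∧ gtMax U V

/-- multiset order, weak: S ≿ms T. -/
def geMS (S T : Multiset ℤ) : Prop := gtMS S T ∨ S = T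

/-- dual multiset order, strict: S ≻dms T. -/
def gtDMS (S T : Multiset ℤ) : Prop :=
  ∃ W U V : Multiset ℤ, V ≠ 0 ∧ S = W + U ∧ T = W + V ∧ gtMin U V

/-- dual multiset order, weak: S ≿dms T. -/
def geDMS (S T : Multiset ℤ) : Prop := gtDMS S T ∨ S = T

lemma mmax_eq (S : Multiset ℤ) :
    mmax S = WithBot.unbotD 0 ((S.map (fun x : ℤ => (x : WithBot ℤ))).sup) := by
  simp [mmax, Bind.bind, Pure.pure, Multiset.pure_def, Multiset.bind_def, Multiset.bind_singleton]

lemma mmin_eq (S : Multiset ℤ) :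
    mmin S = WithTop.untopD 0 ((S.map (fun x : ℤ => (x : WithTop ℤ))).inf) := by
  simp [mmin, Bind.bind, Pure.pure, Multiset.pure_def, Multiset.bind_def, Multiset.bind_singleton]

lemma sup_coe_mmax (S : Multiset ℤ) (hS : S ≠ 0) :
    (S.map (fun x : ℤ => (x : WithBot ℤ))).sup = ↑(mmax S) := by
  induction S using Multiset.induction with
  | empty => simp at hS
  | cons a T ih =>
    by_cases hT : T = 0
    · subst hT
      have key : (((a ::ₘ (0:Multiset ℤ)).map (fun x : ℤ => (x : WithBot ℤ))).sup) = ↑a := by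
        rw [Multiset.map_cons, Multiset.map_zero, Multiset.sup_cons, Multiset.sup_zero]
        simp
      rw [mmax_eq (a ::ₘ 0), key, WithBot.unbotD_coe]
    · have h := ih hT
      have key : (((a ::ₘ T).map (fun x : ℤ => (x : WithBot ℤ))).sup) = ↑(a ⊔ mmax T) := by
        rw [Multiset.map_cons, Multiset.sup_cons, h, ← WithBot.coe_sup]
      rw [mmax_eq (a ::ₘ T), key, WithBot.unbotD_coe]

lemma inf_coe_mmin (S : Multiset ℤ) (hS : S ≠ 0) :
    (S.map (fun x : ℤ => (x : WithTop ℤ))).inf = ↑(mmin S) := by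
  induction S using Multiset.induction with
  | empty => simp at hS
  | cons a T ih =>
    by_cases hT : T = 0
    · subst hT
      have key : (((a ::ₘ (0:Multiset ℤ)).map (fun x : ℤ => (x : WithTop ℤ))).inf) = ↑a := by
        rw [Multiset.map_cons, Multiset.map_zero, Multiset.inf_cons, Multiset.inf_zero]
        simp
      rw [mmin_eq (a ::ₘ 0), key, WithTop.untopD_coe]
    · have h := ih hT
      have key : (((a ::ₘ T).map (fun x : ℤ => (x : WithTop ℤ))).inf) = ↑(a ⊓ mmin T) := by
        rw [Multiset.map_cons, Multiset.inf_cons, h, ← WithTop.coe_inf]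
      rw [mmin_eq (a ::ₘ T), key, WithTop.untopD_coe]

lemma mmax_cons (a : ℤ) (T : Multiset ℤ) (hT : T ≠ 0) : mmax (a ::ₘ T) = max a (mmax T) := by
  have key : (((a ::ₘ T).map (fun x : ℤ => (x : WithBot ℤ))).sup) = ↑(a ⊔ mmax T) := by
    rw [Multiset.map_cons, Multiset.sup_cons, sup_coe_mmax T hT, ← WithBot.coe_sup]
  rw [mmax_eq (a ::ₘ T), key, WithBot.unbotD_coe]

lemma mmin_cons (a : ℤ) (T : Multiset ℤ) (hT : T ≠ 0) : mmin (a ::ₘ T) = min a (mmin T) := by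
  have key : (((a ::ₘ T).map (fun x : ℤ => (x : WithTop ℤ))).inf) = ↑(a ⊓ mmin T) := by
    rw [Multiset.map_cons, Multiset.inf_cons, inf_coe_mmin T hT, ← WithTop.coe_inf]
  rw [mmin_eq (a ::ₘ T), key, WithTop.untopD_coe]

lemma le_mmax {S : Multiset ℤ} {x : ℤ} (hx : x ∈ S) : x ≤ mmax S := by
  have hS : S ≠ 0 := fun h => by simp [h] at hx
  have : (x : WithBot ℤ) ≤ (S.map (fun x : ℤ => (x : WithBot ℤ))).sup :=
    Multiset.le_sup (Multiset.mem_map.2 ⟨x, hx, rfl⟩)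
  rwa [sup_coe_mmax S hS, WithBot.coe_le_coe] at this

lemma mmin_le {S : Multiset ℤ} {x : ℤ} (hx : x ∈ S) : mmin S ≤ x := by
  have hS : S ≠ 0 := fun h => by simp [h] at hx
  have : (S.map (fun x : ℤ => (x : WithTop ℤ))).inf ≤ (x : WithTop ℤ) :=
    Multiset.inf_le (Multiset.mem_map.2 ⟨x, hx, rfl⟩)
  rwa [inf_coe_mmin S hS, WithTop.coe_le_coe] at this

lemma mmax_singleton (a : ℤ) : mmax (a ::ₘ 0) = a := by
  have key : (((a ::ₘ (0:Multiset ℤ)).map (fun x : ℤ => (x : WithBot ℤ))).sup) = ↑a := by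
    rw [Multiset.map_cons, Multiset.map_zero, Multiset.sup_cons, Multiset.sup_zero]
    simp
  rw [mmax_eq (a ::ₘ 0), key, WithBot.unbotD_coe]

lemma mmin_singleton (a : ℤ) : mmin (a ::ₘ 0) = a := by
  have key : (((a ::ₘ (0:Multiset ℤ)).map (fun x : ℤ => (x : WithTop ℤ))).inf) = ↑a := by
    rw [Multiset.map_cons, Multiset.map_zero, Multiset.inf_cons, Multiset.inf_zero]
    simp
  rw [mmin_eq (a ::ₘ 0), key, WithTop.untopD_coe]

lemma mmax_mem {S : Multiset ℤ} (hS : S ≠ 0) : mmax S ∈ S := by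
  induction S using Multiset.induction with
  | empty => simp at hS
  | cons a T ih =>
    by_cases hT : T = 0
    · subst hT; rw [mmax_singleton]; exact Multiset.mem_cons_self a 0
    · rw [mmax_cons a T hT]
      rcases le_total a (mmax T) with h | h
      · rw [max_eq_right h]; exact Multiset.mem_cons_of_mem (ih hT)
      · rw [max_eq_left h]; exact Multiset.mem_cons_self a T

lemma mmin_mem {S : Multiset ℤ} (hS : S ≠ 0) : mmin S ∈ S := by
  induction S using Multiset.induction with
  | empty => simp at hS
  | cons a T ih =>
    by_cases hT : T = 0
    · subst hT; rw [mmin_singleton]; exact Multiset.mem_cons_self a 0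
    · rw [mmin_cons a T hT]
      rcases le_total a (mmin T) with h | h
      · rw [min_eq_left h]; exact Multiset.mem_cons_self a T
      · rw [min_eq_right h]; exact Multiset.mem_cons_of_mem (ih hT)

lemma mapSub_ne_zero {S : Multiset ℤ} (hS : S ≠ 0) (f : ℤ → ℤ) : S.map f ≠ 0 := by
  simpa [Multiset.map_eq_zero] using hS

lemma add_ne_zero_left {S : Multiset ℤ} (hS : S ≠ 0) (T : Multiset ℤ) : S + T ≠ 0 := by
  intro hc
  have : S = 0 := by
    ext a; have := congrArg (Multiset.count a) hc; simp [Multiset.count_add] at this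
    simp [this.1]
  exact hS this

lemma add_ne_zero_right (S : Multiset ℤ) {T : Multiset ℤ} (hT : T ≠ 0) : S + T ≠ 0 := by
  intro hc
  have : T = 0 := by
    ext a; have := congrArg (Multiset.count a) hc; simp [Multiset.count_add] at this
    simp [this.2]
  exact hT this

lemma mmax_add {S T : Multiset ℤ} (hS : S ≠ 0) (hT : T ≠ 0) :
    mmax (S + T) = max (mmax S) (mmax T) := by
  apply le_antisymm
  · rcases Multiset.mem_add.1 (mmax_mem (add_ne_zero_left hS T)) with h | h
    · exact le_max_of_le_left (le_mmax h)
    · exact le_max_of_le_right (le_mmax h)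
  · exact max_le (le_mmax (Multiset.mem_add.2 (Or.inl (mmax_mem hS))))
      (le_mmax (Multiset.mem_add.2 (Or.inr (mmax_mem hT))))

lemma mmin_map_sub {S : Multiset ℤ} (hS : S ≠ 0) (c : ℤ) :
    mmin (S.map (fun l => c - l)) = c - mmax S := by
  apply le_antisymm
  · exact mmin_le (Multiset.mem_map.2 ⟨mmax S, mmax_mem hS, rfl⟩)
  · obtain ⟨x, hx, hEq⟩ := Multiset.mem_map.1 (mmin_mem (mapSub_ne_zero hS _))
    rw [← hEq]
    have := le_mmax hx
    omega

lemma gtMS_mmax {A B : Multiset ℤ} (h : gtMS A B) (hB : B ≠ 0) :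
    A ≠ 0 ∧ mmax B ≤ mmax A := by
  obtain ⟨W, U, V, hU, hA, hBe, hUV⟩ := h
  have hAne : A ≠ 0 := by rw [hA]; exact add_ne_zero_right W hU
  refine ⟨hAne, ?_⟩
  rcases hUV with ⟨_, hV, hUV⟩ | ⟨_, hV0⟩
  · by_cases hW : W = 0
    · subst hW; rw [hA, hBe, zero_add, zero_add]; exact le_of_lt hUV
    · rw [hA, hBe, mmax_add hW hU, mmax_add hW hV]
      exact max_le_max le_rfl (le_of_lt hUV)
  · subst hV0
    rw [hA, hBe, add_zero]
    have hW : W ≠ 0 := by rw [hBe, add_zero] at hB; exact hB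
    exact le_mmax (Multiset.mem_add.2 (Or.inl (mmax_mem hW)))

lemma core (a a' : ℤ) (haa' : a' ≤ a) (L L' : Multiset ℤ)
    (hL : L ≠ 0) (hL' : L' ≠ 0) (h2 : geMS L' L) :
    geDMS (L.map (fun l => a - l)) (L'.map (fun l => a' - l)) ∧
    ((a' < a ∨ gtMS L' L) → gtDMS (L.map (fun l => a - l)) (L'.map (fun l => a' - l))) := by
  have hS : L.map (fun l => a - l) ≠ 0 := mapSub_ne_zero hL _
  have hT : L'.map (fun l => a' - l) ≠ 0 := mapSub_ne_zero hL' _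
  have key1 : a' < a → gtDMS (L.map (fun l => a - l)) (L'.map (fun l => a' - l)) := by
    intro hlt
    have hmax : mmax L ≤ mmax L' := by
      rcases h2 with h | h
      · exact (gtMS_mmax h hL).2
      · rw [h]
    refine ⟨0, _, _, hT, (zero_add _).symm, (zero_add _).symm, Or.inl ⟨hS, hT, ?_⟩⟩
    rw [mmin_map_sub hL a, mmin_map_sub hL' a']
    omega
  have key2 : gtMS L' L → a' = a → gtDMS (L.map (fun l => a - l)) (L'.map (fun l => a' - l)) := by
    rintro ⟨W, U, V, hU, hL'eq, hLeq, hUV⟩ heq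
    subst heq
    refine ⟨W.map (fun l => a' - l), V.map (fun l => a' - l), U.map (fun l => a' - l),
      mapSub_ne_zero hU _, ?_, ?_, ?_⟩
    · rw [hLeq, Multiset.map_add]
    · rw [hL'eq, Multiset.map_add]
    · rcases hUV with ⟨_, hV, hUV⟩ | ⟨_, hV0⟩
      · refine Or.inl ⟨mapSub_ne_zero hV _, mapSub_ne_zero hU _, ?_⟩
        rw [mmin_map_sub hV a', mmin_map_sub hU a']
        omega
      · exact Or.inr ⟨by rw [hV0]; simp, mapSub_ne_zero hU _⟩
  constructor
  · rcases lt_or_eq_of_le haa' with hlt | heq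
    · exact Or.inl (key1 hlt)
    · rcases h2 with h | h
      · exact Or.inl (key2 h heq)
      · exact Or.inr (by rw [h, heq])
  · rintro (h3 | h3)
    · exact key1 h3
    · rcases lt_or_eq_of_le haa' with hlt | heq
      · exact key1 hlt
      · exact key2 h3 heq


/-- Decreasing difference, where the low sets are of type `ms`, the high sets of
type `max` or `min` (with `φ` the corresponding function), and the difference `H ⊖ L`
is the image of `L` under `ℓ ↦ φ H - ℓ`; the difference has type `dms`. -/
theorem diff_decreasing_lowMS (φ : Multiset ℤ → ℤ) (geφ gtφ : Multiset ℤ → Multiset ℤ → Prop)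
    (hrel : (φ = mmax ∧ geφ = geMax ∧ gtφ = gtMax) ∨ (φ = mmin ∧ geφ = geMin ∧ gtφ = gtMin))
    (H H' L L' : Multiset ℤ)
    (hH : H ≠ 0) (hH' : H' ≠ 0) (hL : L ≠ 0) (hL' : L' ≠ 0)
    (h1 : geφ H H') (h2 : geMS L' L) :
    geDMS (L.map (fun l => φ H - l)) (L'.map (fun l => φ H' - l)) ∧
    ((gtφ H H' ∨ gtMS L' L) →
      gtDMS (L.map (fun l => φ H - l)) (L'.map (fun l => φ H' - l))) := by
  have haa' : φ H' ≤ φ H := by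
    rcases hrel with ⟨hφ, hge, _⟩ | ⟨hφ, hge, _⟩
    · subst hφ; subst hge
      rcases h1 with h | ⟨_, _, h⟩
      · exact absurd h hH'
      · exact h
    · subst hφ; subst hge
      rcases h1 with h | ⟨_, _, h⟩
      · exact absurd h hH
      · exact h
  have hstrict : gtφ H H' → φ H' < φ H := by
    intro hgt
    rcases hrel with ⟨hφ, _, hgtEq⟩ | ⟨hφ, _, hgtEq⟩
    · subst hφ; subst hgtEq
      rcases hgt with ⟨_, _, h⟩ | ⟨_, h⟩
      · exact h
      · exact absurd h hH'
    · subst hφ; subst hgtEq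
      rcases hgt with ⟨_, _, h⟩ | ⟨h, _⟩
      · exact h
      · exact absurd h hH
  obtain ⟨w, s⟩ := core (φ H) (φ H') haa' L L' hL hL' h2
  exact ⟨w, fun h3 => s (h3.imp hstrict id)⟩
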